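/- For all positive integers k and n, the sum over all k-tuples (i_1,…,i_k) of positive integers with i_1+⋯+i_k = n of the product 1/(i_1 · i_2 ⋯ i_k) is at most (2e)^n · k!/n^k. -/

import Mathlib

theorem sum_compositions_bound (k n : ℕ) (hk : 0 < k) (hn : 0 < n) :
    ∑ i ∈ (Finset.Nat.antidiagonalTuple k n).filter (fun i => ∀ j, 0 < i j),
        ∏ j, (1 : ℝ) / (i j : ℝ)
      ≤ (2 * Real.exp 1) ^ n * (k.factorial : ℝ) / (n : ℝ) ^ k := by
  set S := (Finset.Nat.antidiagonalTuple k n).filter (fun i => ∀ j, 0 < i j) with hS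
  -- each term is at most 1
  have hterm : ∀ i ∈ S, ∏ j, (1 : ℝ) / (i j : ℝ) ≤ 1 := by
    intro i hi
    obtain ⟨-, hpos⟩ := Finset.mem_filter.mp hi
    refine Finset.prod_le_one (fun j _ => by positivity) (fun j _ => ?_)
    rw [div_le_one (by exact_mod_cast hpos j)]
    exact_mod_cast Nat.one_le_iff_ne_zero.mpr (hpos j).ne'
  have hsum : ∑ i ∈ S, ∏ j, (1 : ℝ) / (i j : ℝ) ≤ (S.card : ℝ) := by
    calc ∑ i ∈ S, ∏ j, (1 : ℝ) / (i j : ℝ) ≤ ∑ _i ∈ S, (1 : ℝ) :=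
          Finset.sum_le_sum hterm
      _ = (S.card : ℝ) := by simp
  -- cardinality bound via compositions
  have hcard : S.card ≤ 2 ^ (n - 1) := by
    have hmem : ∀ i ∈ S, ((List.ofFn i).sum = n) ∧ ∀ x ∈ List.ofFn i, 0 < x := by
      intro i hi
      obtain ⟨hmem, hpos⟩ := Finset.mem_filter.mp hi
      rw [Finset.Nat.mem_antidiagonalTuple] at hmem
      refine ⟨by rw [List.sum_ofFn]; exact hmem, ?_⟩
      intro x hx
      obtain ⟨j, rfl⟩ := List.mem_ofFn.mp hx
      exact hpos j
    classical
    have hinj : Set.InjOn (fun i => if h : i ∈ S then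
        (⟨List.ofFn i, fun {x} hx => (hmem i h).2 x hx, (hmem i h).1⟩ : Composition n)
        else Composition.ones n) S := by
      intro a ha b hb hab
      rw [Finset.mem_coe] at ha hb
      simp only [dif_pos ha, dif_pos hb, Composition.mk.injEq] at hab
      exact List.ofFn_injective hab
    calc S.card ≤ (Finset.univ : Finset (Composition n)).card :=
          Finset.card_le_card_of_injOn _ (fun _ _ => Finset.mem_univ _) hinj
      _ = 2 ^ (n - 1) := by rw [Finset.card_univ, composition_card]
  -- key inequality: n^k ≤ e^n * k!
  have hkey : (n : ℝ) ^ k ≤ Real.exp 1 ^ n * (k.factorial : ℝ) := by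
    have h := Real.pow_div_factorial_le_exp (x := (n : ℝ)) (by positivity) k
    rw [div_le_iff₀ (by positivity)] at h
    rwa [← Real.exp_one_pow] at h
  have hn' : (0 : ℝ) < (n : ℝ) ^ k := by positivity
  have h2 : ((2 : ℝ)) ^ (n - 1) ≤ (2 * Real.exp 1) ^ n * (k.factorial : ℝ) / (n : ℝ) ^ k := by
    rw [le_div_iff₀ hn', mul_pow]
    calc (2 : ℝ) ^ (n - 1) * (n : ℝ) ^ k ≤ 2 ^ n * ((n : ℝ) ^ k) := by
          gcongr <;> [norm_num; omega]
      _ ≤ 2 ^ n * (Real.exp 1 ^ n * (k.factorial : ℝ)) := by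
          gcongr
      _ = 2 ^ n * Real.exp 1 ^ n * (k.factorial : ℝ) := by ring
  calc ∑ i ∈ S, ∏ j, (1 : ℝ) / (i j : ℝ) ≤ (S.card : ℝ) := hsum
    _ ≤ ((2 ^ (n - 1) : ℕ) : ℝ) := by exact_mod_cast hcard
    _ = (2 : ℝ) ^ (n - 1) := by push_cast; ring
    _ ≤ _ := h2
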